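/- Let E be a finite-dimensional real normed vector space and let X, Y : E → E be C¹ vector fields whose Lie bracket vanishes identically: DY(x)·X(x) − DX(x)·Y(x) = 0 for every x ∈ E. Let γ : ℝ → E be an integral curve of Y, i.e. γ′(t) = Y(γ(t)) for every t ∈ ℝ, and let c ∈ ℝ be such that X(γ(0)) = c · Y(γ(0)). Then X(γ(t)) = c · Y(γ(t)) for every t ∈ ℝ. -/

import Mathlib

open Set Filter

/-- If `X` and `Y` are commuting `C¹` vector fields on a finite-dimensional real normed
space (`[X,Y] = 0`), `γ` is an integral curve of `Y`, and `X = c • Y` at `γ 0`, then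
`X = c • Y` all along `γ`: the collinearity locus `Zero (X - c Y)` is invariant under
the flow of `Y`. -/
theorem collinearity_invariant_along_integral_curve
    {E : Type*} [NormedAddCommGroup E] [NormedSpace ℝ E] [FiniteDimensional ℝ E]
    (X Y : E → E) (hX : ContDiff ℝ 1 X) (hY : ContDiff ℝ 1 Y)
    (hcomm : ∀ x : E, fderiv ℝ Y x (X x) - fderiv ℝ X x (Y x) = 0)
    (γ : ℝ → E) (hγ : ∀ t : ℝ, HasDerivAt γ (Y (γ t)) t)
    (c : ℝ) (h0 : X (γ 0) = c • Y (γ 0)) :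
    ∀ t : ℝ, X (γ t) = c • Y (γ t) := by
  intro t
  have hγc : Continuous γ := continuous_iff_continuousAt.mpr fun s => (hγ s).continuousAt
  -- the function we want to show vanishes
  set f : ℝ → E := fun s => X (γ s) - c • Y (γ s) with hf
  -- interval
  set a : ℝ := min 0 t - 1 with ha
  set b : ℝ := max 0 t + 1 with hb
  have hab : a ≤ b := by
    have h1 : min 0 t ≤ 0 := min_le_left _ _
    have h2 : (0:ℝ) ≤ max 0 t := le_max_left _ _
    linarith
  -- continuity of s ↦ fderiv Y (γ s)
  have hA : Continuous fun s : ℝ => fderiv ℝ Y (γ s) :=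
    (hY.continuous_fderiv one_ne_zero).comp hγc
  -- bound on the compact interval
  obtain ⟨C, hC⟩ := isCompact_Icc.exists_bound_of_continuousOn
    (hA.continuousOn (s := Icc a b))
  set K : NNReal := C.toNNReal with hK
  -- clamp
  set θ : ℝ → ℝ := fun s => max a (min s b) with hθ
  have hθmem : ∀ s, θ s ∈ Icc a b := fun s =>
    ⟨le_max_left _ _, max_le (by simpa using hab) (min_le_right _ _)⟩
  have hθeq : ∀ s ∈ Icc a b, θ s = s := by
    intro s hs
    simp only [hθ]
    rw [min_eq_left hs.2, max_eq_right hs.1]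
  -- the (globally Lipschitz) vector field
  set v : ℝ → E → E := fun s x => fderiv ℝ Y (γ (θ s)) x with hv
  have hvlip : ∀ s, LipschitzOnWith K (v s) univ := by
    intro s
    apply LipschitzWith.lipschitzOnWith
    apply ((fderiv ℝ Y (γ (θ s))).lipschitz).weaken
    rw [← NNReal.coe_le_coe]
    calc (‖fderiv ℝ Y (γ (θ s))‖₊ : ℝ) = ‖fderiv ℝ Y (γ (θ s))‖ := rfl
      _ ≤ C := hC _ (hθmem s)
      _ ≤ (K : ℝ) := Real.le_coe_toNNReal C
  -- f solves the ODE on Ioo a b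
  have hDX : Differentiable ℝ X := hX.differentiable one_ne_zero
  have hDY : Differentiable ℝ Y := hY.differentiable one_ne_zero
  have hf' : ∀ s ∈ Ioo a b, HasDerivAt f (v s (f s)) s := by
    intro s hs
    have h1 : HasDerivAt (fun u => X (γ u)) (fderiv ℝ X (γ s) (Y (γ s))) s :=
      (hDX (γ s)).hasFDerivAt.comp_hasDerivAt s (hγ s)
    have h2 : HasDerivAt (fun u => Y (γ u)) (fderiv ℝ Y (γ s) (Y (γ s))) s :=
      (hDY (γ s)).hasFDerivAt.comp_hasDerivAt s (hγ s)
    have h3 : HasDerivAt f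
        (fderiv ℝ X (γ s) (Y (γ s)) - c • fderiv ℝ Y (γ s) (Y (γ s))) s :=
      h1.sub (h2.const_smul c)
    convert h3 using 1
    have hcs : fderiv ℝ Y (γ s) (X (γ s)) = fderiv ℝ X (γ s) (Y (γ s)) :=
      sub_eq_zero.mp (hcomm (γ s))
    rw [hv]
    simp only [hθeq s (Ioo_subset_Icc_self hs), hf]
    rw [map_sub, map_smul, hcs]
  -- apply uniqueness vs the zero solution
  have ht0 : (0:ℝ) ∈ Ioo a b := by
    constructor
    · have : min 0 t ≤ 0 := min_le_left _ _; simp only [ha]; linarith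
    · have : (0:ℝ) ≤ max 0 t := le_max_left _ _; simp only [hb]; linarith
  have htmem : t ∈ Icc a b := by
    constructor
    · have : min 0 t ≤ t := min_le_right _ _; simp only [ha]; linarith
    · have : t ≤ max 0 t := le_max_right _ _; simp only [hb]; linarith
  have hfc : ContinuousOn f (Icc a b) :=
    ((hX.continuous.comp hγc).sub ((hY.continuous.comp hγc).const_smul c)).continuousOn
  have hzero : EqOn f (fun _ => (0:E)) (Icc a b) := by
    apply ODE_solution_unique_of_mem_Icc (s := fun _ => (univ : Set E))
      (fun s _ => hvlip s) ht0 hfc hf' (fun _ _ => trivial)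
      continuousOn_const
      (fun s _ => by
        have : v s 0 = 0 := (fderiv ℝ Y (γ (θ s))).map_zero
        rw [this]; exact hasDerivAt_const s 0)
      (fun _ _ => trivial)
    simp only [hf]
    rw [h0, sub_self]
  have := hzero htmem
  simpa [hf, sub_eq_zero] using this
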